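/- arXiv:1506.01625 — 2 statements merged into one kernel-verified Lean document; each statement's English description precedes it below -/
import Mathlib

section
/- Let H be a complex Hilbert space, P : H → H a bounded linear operator, and (u_n)_{n∈ℕ} a sequence of nonzero vectors with P u_n = λ_n u_n, where the λ_n ∈ ℂ are pairwise distinct, and suppose the linear span of {u_n : n ∈ ℕ} is dense in H. Then: (a) the residual spectrum of P is empty, i.e. for every λ ∈ ℂ, if P − λ·Id is injective then the range of P − λ·Id is dense in H; (b) if moreover there exists a sequence (v_n) in H biorthogonal to (u_n) (i.e. ⟨v_m, u_n⟩ = δ_{nm}, the inner product being conjugate-linear in its first argument), then for every n: P* v_n = conj(λ_n) v_n, the kernel of P* − conj(λ_n)·Id equals the one-dimensional span of v_n, and Ker( (P* − conj(λ_n)·Id)² ) = Ker( P* − conj(λ_n)·Id ); that is, conj(λ_n) is an eigenvalue of the adjoint P* with geometric and algebraic multiplicity one. (Paper: Proposition 'prop:sequence-spectrum', item 1.) -/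
open MeasureTheory ContinuousLinearMap

local notation "⟪" x ", " y "⟫" => @inner ℂ _ _ x y

lemma ortho_dense_zero
    {H : Type*} [NormedAddCommGroup H] [InnerProductSpace ℂ H] [CompleteSpace H]
    (u : ℕ → H)
    (hdense : Dense ((Submodule.span ℂ (Set.range u) : Submodule ℂ H) : Set H))
    (w : H) (hw : ∀ n, (inner ℂ (u n) w : ℂ) = 0) : w = 0 := by
  have h1 : (Submodule.span ℂ (Set.range u)).topologicalClosure = ⊤ :=
    Submodule.dense_iff_topologicalClosure_eq_top.mp hdense
  have h2 : (Submodule.span ℂ (Set.range u))ᗮ = ⊥ :=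
    Submodule.topologicalClosure_eq_top_iff.mp h1
  have hmem : w ∈ (Submodule.span ℂ (Set.range u))ᗮ := by
    rw [Submodule.mem_orthogonal]
    intro x hx
    induction hx using Submodule.span_induction with
    | mem x hx => obtain ⟨n, rfl⟩ := hx; exact hw n
    | zero => simp
    | add x y _ _ hx hy => rw [inner_add_left, hx, hy, add_zero]
    | smul c x _ hx => rw [inner_smul_left, hx, mul_zero]
  rw [h2] at hmem
  simpa using hmem



/-- for a bounded operator `P` on a complex Hilbert space possessing a
complete system of eigenvectors with pairwise distinct eigenvalues, the residual spectrum
is empty; and if there is a biorthogonal sequence `(v_n)`, then each `conj(λ_n)` is an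
eigenvalue of `P*` with geometric and algebraic multiplicity one. -/
theorem complete_eigenvectors_residual_spectrum_empty
    {H : Type*} [NormedAddCommGroup H] [InnerProductSpace ℂ H] [CompleteSpace H]
    (P : H →L[ℂ] H) (u : ℕ → H) (l : ℕ → ℂ)
    (hu : ∀ n, u n ≠ 0)
    (hl : Function.Injective l)
    (heig : ∀ n, P (u n) = l n • u n)
    (hdense : Dense ((Submodule.span ℂ (Set.range u) : Submodule ℂ H) : Set H)) :
    (∀ lam : ℂ, Function.Injective ⇑(P - lam • ContinuousLinearMap.id ℂ H) →
      DenseRange ⇑(P - lam • ContinuousLinearMap.id ℂ H))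
    ∧ (∀ v : ℕ → H, (∀ m n : ℕ, (inner ℂ (v m) (u n) : ℂ) = if n = m then 1 else 0) →
        ∀ n : ℕ,
          ContinuousLinearMap.adjoint P (v n) = (starRingEnd ℂ) (l n) • v n
        ∧ LinearMap.ker
              ((ContinuousLinearMap.adjoint P
                - (starRingEnd ℂ) (l n) • ContinuousLinearMap.id ℂ H) : H →ₗ[ℂ] H)
            = Submodule.span ℂ {v n}
        ∧ LinearMap.ker
              (((ContinuousLinearMap.adjoint P
                  - (starRingEnd ℂ) (l n) • ContinuousLinearMap.id ℂ H)
                ∘L (ContinuousLinearMap.adjoint P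
                  - (starRingEnd ℂ) (l n) • ContinuousLinearMap.id ℂ H)) : H →ₗ[ℂ] H)
            = LinearMap.ker
                ((ContinuousLinearMap.adjoint P
                  - (starRingEnd ℂ) (l n) • ContinuousLinearMap.id ℂ H) : H →ₗ[ℂ] H)) := by
  classical
  constructor
  · -- part (a)
    intro lam hinj
    set T := P - lam • ContinuousLinearMap.id ℂ H with hT
    have hrange : Set.range ⇑T = (LinearMap.range (T : H →ₗ[ℂ] H) : Submodule ℂ H) := by
      simp [LinearMap.coe_range]
    unfold DenseRange
    rw [hrange, Submodule.dense_iff_topologicalClosure_eq_top,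
      Submodule.topologicalClosure_eq_top_iff, Submodule.eq_bot_iff]
    intro w hw
    rw [Submodule.mem_orthogonal] at hw
    have hw' : ∀ x : H, ⟪T x, w⟫ = 0 := fun x => hw _ (LinearMap.mem_range_self _ x)
    by_cases hcase : ∃ n, l n = lam
    · obtain ⟨n, hn⟩ := hcase
      exfalso
      apply hu n
      have hTn : T (u n) = 0 := by simp [hT, heig n, hn]
      exact hinj (a₁ := u n) (a₂ := 0) (by simpa using hTn)
    · push_neg at hcase
      apply ortho_dense_zero u hdense
      intro n
      have h1 : T (u n) = (l n - lam) • u n := by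
        simp [hT, heig n, sub_smul]
      have h2 := hw' (u n)
      rw [h1, inner_smul_left] at h2
      have h3 : (starRingEnd ℂ) (l n - lam) ≠ 0 := by
        rw [map_sub, sub_ne_zero]
        exact fun h => hcase n ((starRingEnd ℂ).injective h)
      exact (mul_eq_zero.mp h2).resolve_left h3
  · -- part (b)
    intro v hbi n
    have hvu : ∀ m k : ℕ, ⟪u k, v m⟫ = if k = m then 1 else 0 := by
      intro m k
      rw [← inner_conj_symm, hbi m k]
      split <;> simp
    have hA : ContinuousLinearMap.adjoint P (v n) = (starRingEnd ℂ) (l n) • v n := by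
      rw [← sub_eq_zero]
      apply ortho_dense_zero u hdense
      intro m
      rw [inner_sub_right, adjoint_inner_right, heig m, inner_smul_left,
        inner_smul_right, hvu n m]
      by_cases hmn : m = n
      · subst hmn; ring
      · simp [hmn]
    set T := ContinuousLinearMap.adjoint P
        - (starRingEnd ℂ) (l n) • ContinuousLinearMap.id ℂ H with hT
    have hTapp : ∀ w : H, T w = ContinuousLinearMap.adjoint P w
        - (starRingEnd ℂ) (l n) • w := by intro w; simp [hT]
    have hker : LinearMap.ker (T : H →ₗ[ℂ] H) = Submodule.span ℂ {v n} := by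
      apply le_antisymm
      · intro w hw
        rw [LinearMap.mem_ker, ContinuousLinearMap.coe_coe] at hw
        have hw' : ContinuousLinearMap.adjoint P w = (starRingEnd ℂ) (l n) • w := by
          have h := hTapp w; rw [hw] at h; exact sub_eq_zero.mp h.symm
        have hperp : ∀ m, m ≠ n → ⟪u m, w⟫ = 0 := by
          intro m hmn
          have h1 : ⟪u m, ContinuousLinearMap.adjoint P w⟫
              = (starRingEnd ℂ) (l m) * ⟪u m, w⟫ := by
            rw [adjoint_inner_right, heig m, inner_smul_left]
          rw [hw', inner_smul_right] at h1
          have h2 : ((starRingEnd ℂ) (l m) - (starRingEnd ℂ) (l n)) * ⟪u m, w⟫ = 0 := by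
            rw [sub_mul, ← h1]; ring
          have h3 : (starRingEnd ℂ) (l m) - (starRingEnd ℂ) (l n) ≠ 0 := by
            rw [sub_ne_zero]
            exact fun h => hmn (hl ((starRingEnd ℂ).injective h))
          exact (mul_eq_zero.mp h2).resolve_left h3
        have hweq : w = ⟪u n, w⟫ • v n := by
          rw [← sub_eq_zero]
          apply ortho_dense_zero u hdense
          intro m
          rw [inner_sub_right, inner_smul_right, hvu n m]
          by_cases hmn : m = n
          · subst hmn; simp
          · rw [hperp m hmn]; simp [hmn]
        rw [hweq]
        exact Submodule.smul_mem _ _ (Submodule.mem_span_singleton_self _)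
      · rw [Submodule.span_singleton_le_iff_mem, LinearMap.mem_ker, ContinuousLinearMap.coe_coe, hTapp, hA, sub_self]
    refine ⟨hA, hker, ?_⟩
    apply le_antisymm
    · intro w hw
      rw [LinearMap.mem_ker] at hw ⊢
      change T w = 0
      have hTw : T w ∈ LinearMap.ker (T : H →ₗ[ℂ] H) := by
        rw [LinearMap.mem_ker]
        simpa using hw
      rw [hker, Submodule.mem_span_singleton] at hTw
      obtain ⟨d, hd⟩ := hTw
      have hinner : ⟪u n, T w⟫ = 0 := by
        rw [hTapp, inner_sub_right, adjoint_inner_right, heig n, inner_smul_left,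
          inner_smul_right, sub_self]
      rw [← hd, inner_smul_right, hvu n n] at hinner
      simp at hinner
      rw [← hd, hinner, zero_smul]
    · intro w hw
      rw [LinearMap.mem_ker] at hw ⊢
      change T w = 0 at hw
      simp [hw]
end

section
/- Let φ be a nondegenerate Bernstein function, so that φ(k) > 0 for every integer k ≥ 1. Set W_φ(1) = 1 and W_φ(n+1) = ∏_{k=1}^n φ(k), and define the polynomials P_n(x) = ∑_{k=0}^n (−1)^k binom(n,k) x^k / W_φ(k+1) and P^{T₁}_n(x) = ∑_{k=0}^n (−1)^k binom(n,k) (k+1) φ(1) x^k / W_φ(k+2). Then for every integer n ≥ 2 and every x ∈ ℝ, the perturbed three-term recurrence P_n(x) = (2 − 1/n) P_{n−1}(x) − (x/(n φ(1))) P^{T₁}_{n−1}(x) − (1 − 1/n) P_{n−2}(x) holds. (Paper: Theorem on eigenfunctions, item on the three-term perturbed recurrence relation; here P^{T₁}_n is the polynomial associated to T₁φ(u) = (u/(u+1)) φ(u+1), for which W_{T₁φ}(k+1) = W_φ(k+2)/((k+1) φ(1)).) -/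
open MeasureTheory

/-- `Wfun φ n = W_φ(n+1) = ∏_{k=1}^n φ(k)`. -/
noncomputable def Wfun (φ : ℝ → ℝ) (n : ℕ) : ℝ := ∏ k ∈ Finset.range n, φ ((k : ℝ) + 1)

/-- The polynomials `P_n(x) = ∑_{k=0}^n (-1)^k C(n,k) x^k / W_φ(k+1)`. -/
noncomputable def Ppoly (φ : ℝ → ℝ) (n : ℕ) (x : ℝ) : ℝ :=
  ∑ k ∈ Finset.range (n + 1), (-1 : ℝ) ^ k * (n.choose k : ℝ) * x ^ k / Wfun φ k

/-- The polynomials `P^{T₁}_n(x) = ∑_{k=0}^n (-1)^k C(n,k) (k+1) φ(1) x^k / W_φ(k+2)`. -/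
noncomputable def PTpoly (φ : ℝ → ℝ) (n : ℕ) (x : ℝ) : ℝ :=
  ∑ k ∈ Finset.range (n + 1),
    (-1 : ℝ) ^ k * (n.choose k : ℝ) * ((k : ℝ) + 1) * φ 1 * x ^ k / Wfun φ (k + 1)

private lemma natkey (m j : ℕ) :
    (m+2) * Nat.choose (m+2) (j+1) + (m+1) * Nat.choose m (j+1)
      = (2*m+3) * Nat.choose (m+1) (j+1) + (j+1) * Nat.choose (m+1) j := by
  rcases le_or_gt j m with hj | hj
  · have h1 : Nat.choose (m+2) (j+1) = Nat.choose (m+1) j + Nat.choose (m+1) (j+1) :=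
      Nat.choose_succ_succ _ _
    have h2 : Nat.choose (m+1) (j+1) = Nat.choose m j + Nat.choose m (j+1) :=
      Nat.choose_succ_succ _ _
    have h3 : Nat.choose m j * (m+1) = Nat.choose (m+1) j * (m+1-j) :=
      Nat.choose_mul_succ_eq m j
    zify [show j ≤ m + 1 by omega] at h3 ⊢
    zify at h1 h2
    linear_combination ((m:ℤ)+2)*h1 - ((m:ℤ)+1)*h2 - h3
  · rcases eq_or_lt_of_le (Nat.succ_le_of_lt hj) with hj' | hj'
    · subst hj'
      simp [Nat.choose_eq_zero_of_lt, Nat.choose_eq_zero_of_lt (show m < m+1+1 by omega)]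
    · have : m + 2 < j + 1 := by omega
      simp [Nat.choose_eq_zero_of_lt, hj, hj', this,
        Nat.choose_eq_zero_of_lt (show m+1 < j by omega),
        Nat.choose_eq_zero_of_lt (show m < j+1 by omega)]

private lemma realkey (m k : ℕ) :
    ((m:ℝ)+2) * ((m+2).choose k : ℝ) + ((m:ℝ)+1) * (m.choose k : ℝ)
      = (2*(m:ℝ)+3) * ((m+1).choose k : ℝ) + (k:ℝ) * ((m+1).choose (k-1) : ℝ) := by
  cases k with
  | zero => simp; ring
  | succ j =>
      have h := congrArg (Nat.cast : ℕ → ℝ) (natkey m j)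
      push_cast at h
      simpa using h

/-- the perturbed three-term recurrence relation for the eigenpolynomials
of a generalized Laguerre semigroup built from a nondegenerate Bernstein function. -/
theorem perturbed_three_term_recurrence
    (φ : ℝ → ℝ) (m σ2 : ℝ) (μ : Measure ℝ)
    (hm : 0 ≤ m) (hσ : 0 ≤ σ2)
    (hμ0 : μ (Set.Iic 0) = 0)
    (hμint : Integrable (fun y : ℝ => min 1 y) μ)
    (hrep : ∀ u : ℝ, 0 < u →
      φ u = m + σ2 * u + ∫ y, (1 - Real.exp (-(u * y))) ∂μ)
    (hnd : ¬ (m = 0 ∧ σ2 = 0 ∧ μ = 0)) :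
    ∀ n : ℕ, 2 ≤ n → ∀ x : ℝ,
      Ppoly φ n x
        = (2 - 1 / (n : ℝ)) * Ppoly φ (n - 1) x
          - x / ((n : ℝ) * φ 1) * PTpoly φ (n - 1) x
          - (1 - 1 / (n : ℝ)) * Ppoly φ (n - 2) x := by
  have hφpos : ∀ u : ℝ, 0 < u → 0 < φ u := by
    intro u hu
    have hae : ∀ᵐ y ∂μ, 0 < y := by
      rw [ae_iff]
      have : {y : ℝ | ¬ 0 < y} = Set.Iic 0 := by ext y; simp
      rw [this]; exact hμ0
    have hfm : AEStronglyMeasurable (fun y : ℝ => 1 - Real.exp (-(u*y))) μ :=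
      (Continuous.aestronglyMeasurable (by continuity))
    have hnonneg : ∀ᵐ y ∂μ, 0 ≤ 1 - Real.exp (-(u*y)) := by
      filter_upwards [hae] with y hy
      have : Real.exp (-(u*y)) < 1 := Real.exp_lt_one_iff.mpr (by nlinarith)
      linarith
    have hbound : ∀ᵐ y ∂μ, ‖(1:ℝ) - Real.exp (-(u*y))‖ ≤ max 1 u * min 1 y := by
      filter_upwards [hae, hnonneg] with y hy hny
      rw [Real.norm_eq_abs, abs_of_nonneg hny]
      have hexp : 1 - u*y ≤ Real.exp (-(u*y)) := by
        have := Real.add_one_le_exp (-(u*y)); linarith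
      rcases le_total y 1 with h1 | h1
      · rw [min_eq_right h1]
        have : 1 - Real.exp (-(u*y)) ≤ u * y := by linarith
        calc 1 - Real.exp (-(u*y)) ≤ u * y := this
          _ ≤ max 1 u * y := mul_le_mul_of_nonneg_right (le_max_right 1 u) hy.le
      · rw [min_eq_left h1]
        have : 1 - Real.exp (-(u*y)) ≤ 1 := by
          have := Real.exp_pos (-(u*y)); linarith
        calc 1 - Real.exp (-(u*y)) ≤ 1 := this
          _ ≤ max 1 u * 1 := by simp [le_max_left]
    have hint : Integrable (fun y : ℝ => 1 - Real.exp (-(u*y))) μ :=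
      (hμint.const_mul (max 1 u)).mono' hfm hbound
    have hI0 : 0 ≤ ∫ y, (1 - Real.exp (-(u*y))) ∂μ := integral_nonneg_of_ae hnonneg
    rw [hrep u hu]
    rcases hm.lt_or_eq with hm' | hm'
    · nlinarith
    rcases hσ.lt_or_eq with hσ' | hσ'
    · nlinarith
    have hμne : μ ≠ 0 := fun h => hnd ⟨hm'.symm, hσ'.symm, h⟩
    have hIpos : 0 < ∫ y, (1 - Real.exp (-(u*y))) ∂μ := by
      rw [integral_pos_iff_support_of_nonneg_ae hnonneg hint]
      have hsub : Set.Ioi (0:ℝ) ⊆ Function.support (fun y : ℝ => 1 - Real.exp (-(u*y))) := by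
        intro y hy
        have : Real.exp (-(u*y)) < 1 := Real.exp_lt_one_iff.mpr (by nlinarith [Set.mem_Ioi.mp hy])
        simp only [Function.mem_support]
        intro h; linarith
      refine lt_of_lt_of_le ?_ (measure_mono hsub)
      by_contra h
      push_neg at h
      have h0 : μ (Set.Ioi (0:ℝ)) = 0 := le_antisymm h (zero_le)
      apply hμne
      have huniv : μ Set.univ = 0 := by
        have := measure_union_le (μ := μ) (Set.Iic (0:ℝ)) (Set.Ioi 0)
        rw [Set.Iic_union_Ioi, hμ0, h0] at this
        simpa using this
      ext s hs
      simp [measure_mono_null (Set.subset_univ s) huniv]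
    nlinarith
  intro n hn x
  obtain ⟨N, rfl⟩ : ∃ N, n = N + 2 := ⟨n - 2, by omega⟩
  have hW : ∀ k, 0 < Wfun φ k := fun k =>
    Finset.prod_pos (fun j _ => hφpos _ (by positivity))
  have hWne : ∀ k, Wfun φ k ≠ 0 := fun k => (hW k).ne'
  have hφ1 : φ 1 ≠ 0 := (hφpos 1 one_pos).ne'
  have hN2 : ((N:ℝ) + 2) ≠ 0 := by positivity
  set c : ℕ → ℝ := fun k => (-1:ℝ)^k * x^k / Wfun φ k with hc
  have hP : ∀ M, Ppoly φ M x = ∑ k ∈ Finset.range (M+1), (M.choose k : ℝ) * c k := by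
    intro M
    exact Finset.sum_congr rfl (fun k _ => by rw [hc]; ring)
  have hPT : x / (((N:ℝ)+2) * φ 1) * PTpoly φ (N+1) x
      = ∑ k ∈ Finset.range (N+3),
          (-(((k:ℝ)/((N:ℝ)+2)) * (((N+1).choose (k-1) : ℕ) : ℝ))) * c k := by
    rw [Finset.sum_range_succ']
    have h0 : (-(((0:ℕ):ℝ)/((N:ℝ)+2) * (((N+1).choose (0-1) : ℕ) : ℝ))) * c 0 = 0 := by
      simp
    rw [h0, add_zero, PTpoly, Finset.mul_sum]
    refine Finset.sum_congr rfl fun k hk => ?_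
    have hcast : ((k+1:ℕ):ℝ) = (k:ℝ) + 1 := by push_cast; ring
    simp only [Nat.add_sub_cancel, hcast, hc]
    have hw := hWne (k+1)
    revert hN2 hw
    generalize ((N:ℝ)+2) = t
    generalize Wfun φ (k+1) = w
    intro ht hw
    field_simp
    ring
  have hP1ext : Ppoly φ (N+1) x = ∑ k ∈ Finset.range (N+3), (((N+1).choose k : ℕ) : ℝ) * c k := by
    rw [hP]
    refine Finset.sum_subset (Finset.range_subset_range.mpr (by omega)) ?_
    intro k hk hk2
    have : N + 1 < k := by
      simp only [Finset.mem_range] at hk hk2; omega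
    simp [Nat.choose_eq_zero_of_lt this]
  have hP0ext : Ppoly φ N x = ∑ k ∈ Finset.range (N+3), ((N.choose k : ℕ) : ℝ) * c k := by
    rw [hP]
    refine Finset.sum_subset (Finset.range_subset_range.mpr (by omega)) ?_
    intro k hk hk2
    have : N < k := by
      simp only [Finset.mem_range] at hk hk2; omega
    simp [Nat.choose_eq_zero_of_lt this]
  have e1 : N + 2 - 1 = N + 1 := by omega
  have e2 : N + 2 - 2 = N := by omega
  have ecast : ((N+2:ℕ):ℝ) = (N:ℝ) + 2 := by push_cast; ring
  rw [e1, e2, ecast, hP (N+2), hPT, hP1ext, hP0ext, Finset.mul_sum, Finset.mul_sum,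
    ← Finset.sum_sub_distrib, ← Finset.sum_sub_distrib]
  refine Finset.sum_congr rfl fun k _ => ?_
  have key := realkey N k
  have hcoef : (((N+2).choose k : ℕ) : ℝ)
      = (2 - 1/((N:ℝ)+2)) * (((N+1).choose k : ℕ) : ℝ)
        + ((k:ℝ)/((N:ℝ)+2)) * (((N+1).choose (k-1) : ℕ) : ℝ)
        - (1 - 1/((N:ℝ)+2)) * ((N.choose k : ℕ) : ℝ) := by
    field_simp
    linarith [key]
  linear_combination c k * hcoef
end
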